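/- Let n ≥ 3, let ℓ > 0 and α ≥ (n−2)ℓ, and set S = αIₙ + ℓ𝟙ₙ𝟙ₙᵀ. Let P be a nonzero n×n real symmetric diagonally dominant matrix with nonnegative entries, and set Q = S⁻¹ P S⁻¹. Then Q_{ii} − Σ_{j≠i} Q_{ij} > 0 for every i = 1,…,n. -/

import Mathlib

open Matrix

theorem conjugated_matrix_row_dominance
    (n : ℕ) (hn : 3 ≤ n) (ℓ α : ℝ) (hℓ : 0 < ℓ) (hα : ((n : ℝ) - 2) * ℓ ≤ α)
    (S : Matrix (Fin n) (Fin n) ℝ)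
    (hS : S = α • (1 : Matrix (Fin n) (Fin n) ℝ) +
      ℓ • Matrix.of (fun _ _ => (1 : ℝ)))
    (P : Matrix (Fin n) (Fin n) ℝ) (hP0 : P ≠ 0) (hPsym : P.IsSymm)
    (hPpos : ∀ i j, 0 ≤ P i j)
    (hPdd : ∀ i, ∑ j ∈ Finset.univ.erase i, |P i j| ≤ |P i i|)
    (Q : Matrix (Fin n) (Fin n) ℝ) (hQ : Q = S⁻¹ * P * S⁻¹) :
    ∀ i, 0 < Q i i - ∑ j ∈ Finset.univ.erase i, Q i j := by
  have hn3 : (3:ℝ) ≤ (n:ℝ) := by exact_mod_cast hn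
  have hα0 : 0 < α := by nlinarith
  have hαn : 0 < α + n * ℓ := by nlinarith
  set u : ℝ := α⁻¹ with hu
  set c : ℝ := ℓ / (α * (α + n * ℓ)) with hc
  have hu0 : 0 < u := by positivity
  have hc0 : 0 < c := by positivity
  set g : ℝ := u - n * c with hg
  have hg0 : 0 < g := by
    have : g = (α + n*ℓ)⁻¹ := by
      rw [hg, hu, hc]; field_simp; ring
    rw [this]; positivity
  set J : Matrix (Fin n) (Fin n) ℝ := Matrix.of (fun _ _ => (1:ℝ)) with hJ
  have hJJ : J * J = (n:ℝ) • J := by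
    ext i j
    simp [hJ, Matrix.mul_apply]
  set T : Matrix (Fin n) (Fin n) ℝ := u • (1 : Matrix (Fin n) (Fin n) ℝ) - c • J with hT
  have hST : S * T = 1 := by
    rw [hS, hT]
    simp only [add_mul, mul_sub, smul_mul_assoc, mul_smul_comm, one_mul, mul_one,
      hJJ, smul_smul, smul_sub]
    have h1 : α * u = 1 := by rw [hu]; field_simp
    have h2 : ℓ * u = α * c + ℓ * (c * n) := by
      rw [hu, hc]; field_simp
    match_scalars
    · rw [hu]; field_simp
    · rw [hu, hc]; field_simp; ring
  have hSinv : S⁻¹ = T := inv_eq_right_inv hST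
  -- entry formulas for multiplication by T
  have hMT : ∀ (M : Matrix (Fin n) (Fin n) ℝ) i k,
      (M * T) i k = u * M i k - c * ∑ b, M i b := by
    intro M i k
    rw [hT]
    simp [Matrix.mul_apply, Matrix.one_apply, mul_sub, Finset.sum_sub_distrib,
      Finset.mul_sum, Finset.sum_mul, mul_ite, mul_one, mul_zero, mul_comm, hJ]
  have hTM : ∀ (M : Matrix (Fin n) (Fin n) ℝ) i k,
      (T * M) i k = u * M i k - c * ∑ a, M a k := by
    intro M i k
    rw [hT]
    simp [Matrix.mul_apply, Matrix.one_apply, sub_mul, Finset.sum_sub_distrib,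
      Finset.mul_sum, ite_mul, one_mul, zero_mul, hJ]
  set r : Fin n → ℝ := fun a => ∑ b, P a b with hr
  set W : ℝ := ∑ a, r a with hW
  have hsym : ∀ a b, P a b = P b a := fun a b => hPsym.apply b a
  have hcol : ∀ k, (∑ a, P a k) = r k := by
    intro k
    rw [hr]
    exact Finset.sum_congr rfl (fun a _ => hsym a k)
  have hQe : ∀ i k, Q i k = u*u*P i k - u*c*(r i) - u*c*(r k) + c*c*W := by
    intro i k
    rw [hQ, hSinv, hMT (T*P) i k, hTM P i k]
    have h1 : (∑ b, (T * P) i b) = u * r i - c * W := by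
      rw [Finset.sum_congr rfl (fun b _ => hTM P i b)]
      rw [Finset.sum_sub_distrib, ← Finset.mul_sum, ← Finset.mul_sum]
      rw [hW]
      have e : (∑ x : Fin n, ∑ a, P a x) = ∑ a, r a :=
        Finset.sum_congr rfl fun b _ => hcol b
      rw [e]
    rw [h1, hcol k]
    ring
  -- nonnegativity of row sums
  have hr0 : ∀ a, 0 ≤ r a := fun a => Finset.sum_nonneg (fun b _ => hPpos a b)
  have hW0 : 0 < W := by
    have hex : ∃ a b, 0 < P a b := by
      by_contra h
      push_neg at h
      apply hP0
      ext a b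
      exact le_antisymm (h a b) (hPpos a b)
    obtain ⟨a, b, hab⟩ := hex
    have h1 : P a b ≤ r a := Finset.single_le_sum (fun j _ => hPpos a j) (Finset.mem_univ b)
    have h2 : r a ≤ W := Finset.single_le_sum (fun j _ => hr0 j) (Finset.mem_univ a)
    linarith
  intro i
  set s : ℝ := ∑ j ∈ Finset.univ.erase i, P i j with hsdef
  have hs0 : 0 ≤ s := Finset.sum_nonneg (fun j _ => hPpos i j)
  have habs : ∀ a, (∑ j ∈ Finset.univ.erase a, P a j) ≤ P a a := by
    intro a
    have := hPdd a
    rwa [abs_of_nonneg (hPpos a a),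
      Finset.sum_congr rfl (fun j _ => abs_of_nonneg (hPpos a j))] at this
  have hsp : s ≤ P i i := habs i
  have hri : r i = P i i + s := by
    rw [hr, hsdef, Finset.add_sum_erase _ _ (Finset.mem_univ i)]
  -- lower bound for W
  have hra : ∀ a, a ≠ i → 2 * P i a ≤ r a := by
    intro a ha
    have hmem : i ∈ Finset.univ.erase a := Finset.mem_erase.2 ⟨fun h => ha h.symm, Finset.mem_univ i⟩
    have h1 : P a i ≤ ∑ j ∈ Finset.univ.erase a, P a j :=
      Finset.single_le_sum (fun j _ => hPpos a j) hmem
    have h2 : (∑ j ∈ Finset.univ.erase a, P a j) ≤ P a a := habs a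
    have h3 : r a = P a a + ∑ j ∈ Finset.univ.erase a, P a j := by
      rw [hr, Finset.add_sum_erase _ _ (Finset.mem_univ a)]
    rw [hsym i a]
    linarith
  have hWlb : P i i + 3 * s ≤ W := by
    have h1 : W = r i + ∑ a ∈ Finset.univ.erase i, r a := by
      rw [hW, Finset.add_sum_erase _ _ (Finset.mem_univ i)]
    have h2 : (∑ a ∈ Finset.univ.erase i, 2 * P i a) ≤ ∑ a ∈ Finset.univ.erase i, r a :=
      Finset.sum_le_sum (fun a ha => hra a (Finset.ne_of_mem_erase ha))
    have h3 : (∑ a ∈ Finset.univ.erase i, 2 * P i a) = 2 * s := by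
      rw [hsdef, Finset.mul_sum]
    linarith
  -- compute the target quantity
  have hsum : (∑ j ∈ Finset.univ.erase i, Q i j) = (∑ j, Q i j) - Q i i := by
    rw [← Finset.add_sum_erase _ _ (Finset.mem_univ i)]
    ring
  have hrowQ : (∑ j, Q i j) = u*u*(r i) - (n:ℝ)*(u*c*(r i)) - u*c*W + (n:ℝ)*(c*c*W) := by
    rw [Finset.sum_congr rfl (fun j _ => hQe i j)]
    rw [Finset.sum_add_distrib, Finset.sum_sub_distrib, Finset.sum_sub_distrib]
    simp only [Finset.sum_const, Finset.card_univ, Fintype.card_fin, nsmul_eq_mul]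
    have e1 : (∑ x, u*u*P i x) = u*u*(r i) := by
      rw [← Finset.mul_sum]
    have e3 : (∑ x, u*c*r x) = u*c*W := by
      rw [← Finset.mul_sum, ← hW]
    rw [e1, e3]
  clear_value s r W g c u
  rw [hsum, hQe i i, hrowQ, hri]
  -- final scalar inequality
  have hcg : 0 < c * (2*c + g) := by positivity
  have hu' : u = g + (n:ℝ) * c := by rw [hg]; ring
  have hexp : 2*(u*u*P i i - u*c*(P i i + s) - u*c*(P i i + s) + c*c*W)
      - (u*u*(P i i + s) - (n:ℝ)*(u*c*(P i i + s)) - u*c*W + (n:ℝ)*(c*c*W))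
      = 2*c*((n:ℝ)-2)*(g+((n:ℝ)-2)*c)*(P i i)
        + (g*g + ((n:ℝ)+1)*c*g + (4*(n:ℝ)-6)*c*c)*(P i i - s)
        + (c*(2*c+g))*(W - (P i i + 3*s)) := by
    rw [hu']; ring
  have hn2 : (0:ℝ) < (n:ℝ) - 2 := by linarith
  have hN2 : 0 ≤ (g*g + ((n:ℝ)+1)*c*g + (4*(n:ℝ)-6)*c*c)*(P i i - s) := by
    have h1 : 0 ≤ g*g := mul_self_nonneg g
    have h2 : 0 ≤ ((n:ℝ)+1)*c*g := by positivity
    have h3 : 0 ≤ (4*(n:ℝ)-6)*c*c := by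
      have h4 : (0:ℝ) ≤ 4*(n:ℝ)-6 := by linarith
      exact mul_nonneg (mul_nonneg h4 hc0.le) hc0.le
    exact mul_nonneg (by linarith) (by linarith)
  have hN3 : 0 ≤ (c*(2*c+g))*(W - (P i i + 3*s)) :=
    mul_nonneg hcg.le (by linarith)
  have main : 0 < 2*(u*u*P i i - u*c*(P i i + s) - u*c*(P i i + s) + c*c*W)
      - (u*u*(P i i + s) - (n:ℝ)*(u*c*(P i i + s)) - u*c*W + (n:ℝ)*(c*c*W)) := by
    rw [hexp]
    rcases eq_or_lt_of_le (hPpos i i) with hp | hp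
    · have hs : s = 0 := le_antisymm (by linarith) hs0
      have hN1 : 0 ≤ 2*c*((n:ℝ)-2)*(g+((n:ℝ)-2)*c)*(P i i) := by
        rw [← hp]; simp
      have hW' : 0 < (c*(2*c+g))*(W - (P i i + 3*s)) := by
        apply mul_pos hcg
        rw [hs, ← hp]
        simpa using hW0
      linarith
    · have hN1 : 0 < 2*c*((n:ℝ)-2)*(g+((n:ℝ)-2)*c)*(P i i) := by positivity
      linarith
  linarith [main]
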